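/- arXiv:1903.05910 — 5 statements merged into one kernel-verified Lean document; each statement's English description precedes it below -/
import Mathlib

section
/- If a homogeneous noncommutative polynomial p of degree δd with grouped coefficient function P admits a t-term (δ,d)-NC Waring decomposition, i.e. there exists A : Fin t → (Fin δ → Fin g) → ℂ with p = ∑_{s : Fin t} (∑_{β} A(s,β) • x^β)^d in the free algebra, then p satisfies the δ-compatibility condition: P(μ) = P(μ ∘ π) for every μ : Fin d → (Fin δ → Fin g) and every permutation π of Fin d. -/
open scoped BigOperators

/-- The ordered noncommutative word `x_{β 0} x_{β 1} ⋯ x_{β (δ-1)}` in the free algebra. -/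
noncomputable def ncWord {g δ : ℕ} (β : Fin δ → Fin g) : FreeAlgebra ℂ (Fin g) :=
  (List.ofFn fun i => FreeAlgebra.ι ℂ (β i)).prod

/-- The ordered product `x^{μ 0} x^{μ 1} ⋯ x^{μ (d-1)}` of the `δ`-blocks of `μ`. -/
noncomputable def ncGWord {g d δ : ℕ} (μ : Fin d → Fin δ → Fin g) : FreeAlgebra ℂ (Fin g) :=
  (List.ofFn fun i => ncWord (μ i)).prod

namespace Stmt8Aux

/-- concatenated list of a grouped word -/
def toList {g d δ : ℕ} (μ : Fin d → Fin δ → Fin g) : List (Fin g) :=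
  (List.ofFn fun i => List.ofFn (μ i)).flatten

lemma toList_inj {g d δ : ℕ} {μ ν : Fin d → Fin δ → Fin g}
    (h : toList μ = toList ν) : μ = ν := by
  induction d with
  | zero => funext i; exact absurd i.2 (Nat.not_lt_zero _)
  | succ n ih =>
      unfold toList at h
      rw [List.ofFn_succ, List.ofFn_succ, List.flatten_cons, List.flatten_cons] at h
      have hlen : (List.ofFn (μ 0)).length = (List.ofFn (ν 0)).length := by simp
      obtain ⟨h1, h2⟩ := List.append_inj h hlen
      have h0 : μ 0 = ν 0 := by
        funext j
        have := congrArg (fun l => l[(j : ℕ)]?) h1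
        simpa [List.getElem?_ofFn] using this
      have htail : (fun i : Fin n => μ i.succ) = fun i : Fin n => ν i.succ := ih h2
      funext i
      refine Fin.cases ?_ ?_ i
      · exact h0
      · intro j; exact congrFun htail j

lemma equiv_ι {g : ℕ} (x : Fin g) :
    FreeAlgebra.equivMonoidAlgebraFreeMonoid (FreeAlgebra.ι ℂ x)
      = MonoidAlgebra.single (FreeMonoid.of x) 1 := by
  simp [FreeAlgebra.equivMonoidAlgebraFreeMonoid]

lemma equiv_ncWord {g δ : ℕ} (β : Fin δ → Fin g) :
    FreeAlgebra.equivMonoidAlgebraFreeMonoid (ncWord β)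
      = MonoidAlgebra.single (FreeMonoid.ofList (List.ofFn β)) 1 := by
  unfold ncWord
  rw [map_list_prod]
  have : (List.ofFn fun i => FreeAlgebra.ι ℂ (β i)).map
      FreeAlgebra.equivMonoidAlgebraFreeMonoid
      = (List.ofFn β).map (fun x => MonoidAlgebra.single (FreeMonoid.of x) (1 : ℂ)) := by
    simp only [List.map_ofFn]
    congr 1
    funext i
    exact equiv_ι (β i)
  rw [this]
  induction (List.ofFn β) with
  | nil => simp [MonoidAlgebra.one_def]
  | cons a t iht =>
      simp only [List.map_cons, List.prod_cons, iht, MonoidAlgebra.single_mul_single, one_mul]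
      rfl

lemma equiv_ncGWord {g d δ : ℕ} (μ : Fin d → Fin δ → Fin g) :
    FreeAlgebra.equivMonoidAlgebraFreeMonoid (ncGWord μ)
      = MonoidAlgebra.single (FreeMonoid.ofList (toList μ)) 1 := by
  unfold ncGWord toList
  rw [map_list_prod]
  rw [show (List.ofFn fun i => ncWord (μ i)).map FreeAlgebra.equivMonoidAlgebraFreeMonoid
      = (List.ofFn fun i => List.ofFn (μ i)).map
          (fun l => MonoidAlgebra.single (FreeMonoid.ofList l) (1 : ℂ)) by
    simp only [List.map_ofFn]
    congr 1
    funext i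
    exact equiv_ncWord (μ i)]
  induction (List.ofFn fun i => List.ofFn (μ i)) with
  | nil => simp [MonoidAlgebra.one_def]
  | cons a t iht =>
      simp only [List.map_cons, List.prod_cons, iht, MonoidAlgebra.single_mul_single, one_mul,
        List.flatten_cons]
      rfl

/-- expansion of a power of a sum of scalar multiples -/
lemma pow_expand {R : Type*} [Ring R] [Algebra ℂ R] {B : Type*} [Fintype B] [DecidableEq B]
    (c : B → ℂ) (w : B → R) (n : ℕ) :
    (∑ β : B, c β • w β) ^ n
      = ∑ ν : Fin n → B, (∏ i, c (ν i)) • (List.ofFn fun i => w (ν i)).prod := by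
  induction n with
  | zero => simp
  | succ n ih =>
      rw [pow_succ, ih, Finset.sum_mul,
        ← (Fin.snocEquiv (fun _ : Fin (n + 1) => B)).sum_comp
          (fun ν => (∏ i, c (ν i)) • (List.ofFn fun i => w (ν i)).prod),
        Fintype.sum_prod_type, Finset.sum_comm]
      refine Finset.sum_congr rfl fun ν _ => ?_
      rw [Finset.mul_sum]
      refine Finset.sum_congr rfl fun b _ => ?_
      rw [smul_mul_smul_comm]
      congr 1
      · rw [Fin.prod_univ_castSucc]
        simp [Fin.snocEquiv, Fin.snoc_castSucc, Fin.snoc_last]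
      · rw [List.ofFn_succ']
        simp [Fin.snocEquiv, Fin.snoc_castSucc, Fin.snoc_last, List.concat_eq_append]

end Stmt8Aux

open Stmt8Aux in
theorem stmt8 (g d δ t : ℕ) (hg : 1 ≤ g) (hd : 1 ≤ d) (hδ : 1 ≤ δ) (ht : 1 ≤ t)
    (P : (Fin d → (Fin δ → Fin g)) → ℂ) (A : Fin t → (Fin δ → Fin g) → ℂ)
    (hdecomp : (∑ μ : Fin d → (Fin δ → Fin g), P μ • ncGWord μ)
      = ∑ s : Fin t, (∑ β : Fin δ → Fin g, A s β • ncWord β) ^ d) :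
    ∀ (μ : Fin d → (Fin δ → Fin g)) (π : Equiv.Perm (Fin d)), P (μ ∘ π) = P μ := by
  classical
  have key : ∀ μ₀ : Fin d → Fin δ → Fin g, P μ₀ = ∑ s, ∏ i, A s (μ₀ i) := by
    intro μ₀
    have h := hdecomp
    simp_rw [pow_expand] at h
    set b := FreeAlgebra.basisFreeMonoid ℂ (Fin g) with hb
    set φ : FreeAlgebra ℂ (Fin g) →ₗ[ℂ] ℂ := b.coord (FreeMonoid.ofList (toList μ₀)) with hφdef
    have hφ : ∀ ν : Fin d → Fin δ → Fin g,
        φ ((List.ofFn fun i => ncWord (ν i)).prod) = if ν = μ₀ then 1 else 0 := by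
      intro ν
      have : (List.ofFn fun i => ncWord (ν i)).prod = ncGWord ν := rfl
      rw [this, hφdef, Module.Basis.coord_apply, hb]
      have hrepr : ((FreeAlgebra.basisFreeMonoid ℂ (Fin g)).repr (ncGWord ν))
            (FreeMonoid.ofList (toList μ₀))
          = (FreeAlgebra.equivMonoidAlgebraFreeMonoid (ncGWord ν)).coeff
            (FreeMonoid.ofList (toList μ₀)) := rfl
      rw [hrepr, equiv_ncGWord, MonoidAlgebra.coeff_single, Finsupp.single_apply]
      congr 1
      simp only [eq_iff_iff]
      constructor
      · intro hh
        exact toList_inj (congrArg FreeMonoid.toList hh)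
      · rintro rfl; rfl
    have h2 := congrArg φ h
    simp only [map_sum, map_smul, hφ, smul_eq_mul, mul_ite, mul_one, mul_zero,
      Finset.sum_ite_eq', Finset.mem_univ, if_true] at h2
    have hφG : ∀ ν : Fin d → Fin δ → Fin g, φ (ncGWord ν) = if ν = μ₀ then 1 else 0 :=
      fun ν => hφ ν
    simp only [map_sum, map_smul, hφG, smul_eq_mul, mul_ite, mul_one, mul_zero,
      Finset.sum_ite_eq', Finset.mem_univ, if_true] at h2
    exact h2
  intro μ π
  rw [key, key]
  refine Finset.sum_congr rfl fun s _ => ?_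
  exact Fintype.prod_equiv π _ _ fun i => rfl
end

section
/- Let p be a homogeneous noncommutative polynomial of degree δd with grouped coefficient function P, and let A : Fin t → (Fin δ → Fin g) → ℂ. Then p = ∑_{s : Fin t} (∑_{β} A(s,β) • x^β)^d holds in the free algebra if and only if for every μ : Fin d → (Fin δ → Fin g) one has P(μ) = ∑_{s : Fin t} ∏_{i : Fin d} A(s, μ(i)). -/
open scoped BigOperators

namespace Stmt9Aux

/-- The word in the free monoid corresponding to `ncWord β`. -/
def fmWord {g δ : ℕ} (β : Fin δ → Fin g) : FreeMonoid (Fin g) :=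
  (List.ofFn fun i => FreeMonoid.of (β i)).prod

/-- The word in the free monoid corresponding to `ncGWord μ`. -/
def fmGWord {g d δ : ℕ} (μ : Fin d → Fin δ → Fin g) : FreeMonoid (Fin g) :=
  (List.ofFn fun i => fmWord (μ i)).prod

lemma map_ofFn_prod {M N F : Type*} [Monoid M] [Monoid N] [FunLike F M N]
    [MonoidHomClass F M N] (f : F) {n : ℕ} (x : Fin n → M) :
    f (List.ofFn x).prod = (List.ofFn fun i => f (x i)).prod := by
  rw [map_list_prod, List.map_ofFn]
  rfl

lemma toList_fmWord {g δ : ℕ} (β : Fin δ → Fin g) :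
    FreeMonoid.toList (fmWord β) = List.ofFn β := by
  induction δ with
  | zero => simp [fmWord]
  | succ n ih =>
    have h := ih (fun i => β i.succ)
    simp only [fmWord] at h ⊢
    rw [List.ofFn_succ, List.prod_cons, List.ofFn_succ, FreeMonoid.toList_mul, h]
    rfl

lemma toList_fmGWord {g d δ : ℕ} (μ : Fin d → Fin δ → Fin g) :
    FreeMonoid.toList (fmGWord μ) = (List.ofFn fun i => List.ofFn (μ i)).flatten := by
  induction d with
  | zero => simp [fmGWord]
  | succ n ih =>
    have h := ih (fun i => μ i.succ)
    simp only [fmGWord] at h ⊢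
    rw [List.ofFn_succ, List.prod_cons, List.ofFn_succ, List.flatten_cons,
      FreeMonoid.toList_mul, h, toList_fmWord]

lemma flatten_inj {g δ : ℕ} : ∀ {d : ℕ} {μ ν : Fin d → Fin δ → Fin g},
    (List.ofFn fun i => List.ofFn (μ i)).flatten
      = (List.ofFn fun i => List.ofFn (ν i)).flatten → μ = ν := by
  intro d
  induction d with
  | zero => intro μ ν _; funext i; exact i.elim0
  | succ n ih =>
    intro μ ν h'
    rw [List.ofFn_succ, List.ofFn_succ, List.flatten_cons, List.flatten_cons] at h'
    obtain ⟨h1, h2⟩ := List.append_inj h' (by simp)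
    have h0 := List.ofFn_injective h1
    have ht := ih h2
    funext i
    cases i using Fin.cases with
    | zero => exact h0
    | succ j => exact congrFun ht j

lemma fmGWord_injective {g d δ : ℕ} :
    Function.Injective (fmGWord : (Fin d → Fin δ → Fin g) → FreeMonoid (Fin g)) := by
  intro μ ν h
  refine flatten_inj ?_
  rw [← toList_fmGWord, ← toList_fmGWord, h]

noncomputable abbrev E (g : ℕ) :
    FreeAlgebra ℂ (Fin g) ≃ₐ[ℂ] MonoidAlgebra ℂ (FreeMonoid (Fin g)) :=
  FreeAlgebra.equivMonoidAlgebraFreeMonoid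

lemma E_ι {g : ℕ} (x : Fin g) :
    E g (FreeAlgebra.ι ℂ x)
      = MonoidAlgebra.of ℂ (FreeMonoid (Fin g)) (FreeMonoid.of x) := by
  simp [E, FreeAlgebra.equivMonoidAlgebraFreeMonoid]

lemma E_ncWord {g δ : ℕ} (β : Fin δ → Fin g) :
    E g (ncWord β) = MonoidAlgebra.of ℂ (FreeMonoid (Fin g)) (fmWord β) := by
  rw [ncWord, map_ofFn_prod, fmWord, map_ofFn_prod]
  exact congrArg List.prod (congrArg List.ofFn (funext fun i => E_ι (β i)))

lemma E_ncGWord {g d δ : ℕ} (μ : Fin d → Fin δ → Fin g) :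
    E g (ncGWord μ) = MonoidAlgebra.of ℂ (FreeMonoid (Fin g)) (fmGWord μ) := by
  rw [ncGWord, map_ofFn_prod, fmGWord, map_ofFn_prod]
  exact congrArg List.prod (congrArg List.ofFn (funext fun i => E_ncWord (μ i)))

lemma expand {g : ℕ} {X : Type*} [Fintype X] (n : ℕ) (c : X → ℂ)
    (y : X → FreeAlgebra ℂ (Fin g)) :
    (∑ β : X, c β • y β) ^ n
      = ∑ μ : Fin n → X, (∏ i, c (μ i)) • (List.ofFn fun i => y (μ i)).prod := by
  induction n with
  | zero =>
    rw [pow_zero, Fintype.sum_unique]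
    simp
  | succ n ih =>
    rw [pow_succ', ih, Finset.sum_mul_sum]
    rw [← Equiv.sum_comp (Fin.consEquiv (fun _ : Fin (n + 1) => X))
      (fun μ => (∏ i, c (μ i)) • (List.ofFn fun i => y (μ i)).prod)]
    rw [Fintype.sum_prod_type]
    refine Finset.sum_congr rfl fun β _ => Finset.sum_congr rfl fun μ _ => ?_
    simp only [Fin.consEquiv_apply]
    rw [Fin.prod_univ_succ, List.ofFn_succ, List.prod_cons]
    simp only [Fin.cons_zero, Fin.cons_succ]
    rw [smul_mul_smul_comm]

lemma coeff_eq {g d δ : ℕ} (c c' : (Fin d → Fin δ → Fin g) → ℂ)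
    (h : ∑ μ, c μ • ncGWord μ = ∑ μ, c' μ • ncGWord μ) : ∀ μ, c μ = c' μ := by
  intro μ0
  have h2 := congrArg (E g) h
  simp only [map_sum, map_smul, E_ncGWord, MonoidAlgebra.of_apply] at h2
  have h3 := congrArg (fun f : MonoidAlgebra ℂ (FreeMonoid (Fin g)) => f.coeff (fmGWord μ0)) h2
  beta_reduce at h3
  rw [MonoidAlgebra.coeff_sum, MonoidAlgebra.coeff_sum, Finset.sum_apply', Finset.sum_apply'] at h3
  classical
  simpa [MonoidAlgebra.coeff_single, Finsupp.single_apply, fmGWord_injective.eq_iff] using h3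

end Stmt9Aux

theorem stmt9 (g d δ t : ℕ) (hg : 1 ≤ g) (hd : 1 ≤ d) (hδ : 1 ≤ δ) (ht : 1 ≤ t)
    (P : (Fin d → (Fin δ → Fin g)) → ℂ) (A : Fin t → (Fin δ → Fin g) → ℂ) :
    ((∑ μ : Fin d → (Fin δ → Fin g), P μ • ncGWord μ)
        = ∑ s : Fin t, (∑ β : Fin δ → Fin g, A s β • ncWord β) ^ d)
      ↔ ∀ μ : Fin d → (Fin δ → Fin g),
          P μ = ∑ s : Fin t, ∏ i : Fin d, A s (μ i) := by
  have hRHS : (∑ s : Fin t, (∑ β : Fin δ → Fin g, A s β • ncWord β) ^ d)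
      = ∑ μ : Fin d → (Fin δ → Fin g),
          (∑ s : Fin t, ∏ i : Fin d, A s (μ i)) • ncGWord μ := by
    have : ∀ s : Fin t, (∑ β : Fin δ → Fin g, A s β • ncWord β) ^ d
        = ∑ μ : Fin d → (Fin δ → Fin g), (∏ i, A s (μ i)) • ncGWord μ := by
      intro s
      exact Stmt9Aux.expand d (A s) ncWord
    rw [Finset.sum_congr rfl fun s _ => this s, Finset.sum_comm]
    exact Finset.sum_congr rfl fun μ _ => (Finset.sum_smul).symm
  rw [hRHS]
  constructor
  · intro h
    exact Stmt9Aux.coeff_eq _ _ h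
  · intro h
    exact Finset.sum_congr rfl fun μ _ => by rw [h μ]
end

section
/- Let p be a homogeneous noncommutative polynomial of degree δd with grouped coefficient function P, and let φ(p) = ∑_{μ : Fin d → (Fin δ → Fin g)} P(μ) • z_{μ(0)} z_{μ(1)} ⋯ z_{μ(d-1)} be the corresponding homogeneous degree-d element of FreeAlgebra ℂ (Fin δ → Fin g) in the generators z_β. Then p has a t-term (δ,d)-NC Waring decomposition if and only if φ(p) has a t-term NC Waring decomposition into d-th powers of linear forms, i.e. φ(p) = ∑_{s : Fin t} (∑_{β} A(s,β) • z_β)^d for some A : Fin t → (Fin δ → Fin g) → ℂ; moreover the same coefficient family A works on both sides. -/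
open scoped BigOperators

/-- The word `z_{μ 0} z_{μ 1} ⋯ z_{μ (d-1)}` in the free algebra on the `g^δ` letters `z_β`. -/
noncomputable def zWord {g d δ : ℕ} (μ : Fin d → Fin δ → Fin g) :
    FreeAlgebra ℂ (Fin δ → Fin g) :=
  (List.ofFn fun i => FreeAlgebra.ι ℂ (μ i)).prod

lemma flatten_ofFn_inj {α : Type*} {δ : ℕ} (hδ : 1 ≤ δ) :
    ∀ (l1 l2 : List (Fin δ → α)),
      (l1.map List.ofFn).flatten = (l2.map List.ofFn).flatten → l1 = l2 := by
  intro l1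
  induction l1 with
  | nil =>
    intro l2 h
    cases l2 with
    | nil => rfl
    | cons b l2 =>
      exfalso
      have := congrArg List.length h
      simp at this
      omega
  | cons a l1 ih =>
    intro l2 h
    cases l2 with
    | nil =>
      exfalso
      have := congrArg List.length h
      simp at this
      omega
    | cons b l2 =>
      simp only [List.map_cons, List.flatten_cons] at h
      obtain ⟨h1, h2⟩ := List.append_inj h (by simp)
      rw [List.ofFn_injective h1, ih l2 h2]


noncomputable def blockHom (g δ : ℕ) : FreeMonoid (Fin δ → Fin g) →* FreeMonoid (Fin g) :=
  FreeMonoid.lift fun β => FreeMonoid.ofList (List.ofFn β)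

lemma blockHom_apply {g δ : ℕ} (w : FreeMonoid (Fin δ → Fin g)) :
    blockHom g δ w = FreeMonoid.ofList ((w.toList.map List.ofFn).flatten) := by
  conv_lhs => rw [← FreeMonoid.ofList_toList w]
  rw [blockHom, FreeMonoid.lift_ofList, FreeMonoid.ofList_flatten, List.map_map]
  rfl

lemma blockHom_injective {g δ : ℕ} (hδ : 1 ≤ δ) :
    Function.Injective (blockHom g δ) := by
  intro w1 w2 h
  rw [blockHom_apply, blockHom_apply] at h
  have h2 := flatten_ofFn_inj hδ _ _ (FreeMonoid.ofList.injective h)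
  have := congrArg FreeMonoid.ofList h2
  rwa [FreeMonoid.ofList_toList, FreeMonoid.ofList_toList] at this

noncomputable def phi (g δ : ℕ) :
    FreeAlgebra ℂ (Fin δ → Fin g) →ₐ[ℂ] FreeAlgebra ℂ (Fin g) :=
  FreeAlgebra.lift ℂ fun β => ncWord β

lemma phi_eq (g δ : ℕ) :
    phi g δ =
      (FreeAlgebra.equivMonoidAlgebraFreeMonoid.symm.toAlgHom.comp
        ((MonoidAlgebra.mapDomainAlgHom ℂ ℂ (blockHom g δ)).comp
          FreeAlgebra.equivMonoidAlgebraFreeMonoid.toAlgHom)) := by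
  apply FreeAlgebra.hom_ext
  funext β
  simp only [Function.comp_apply, AlgHom.coe_comp, AlgEquiv.toAlgHom_eq_coe, AlgHom.coe_coe]
  rw [phi, FreeAlgebra.lift_ι_apply]
  show ncWord β = FreeAlgebra.equivMonoidAlgebraFreeMonoid.symm
    ((MonoidAlgebra.mapDomainAlgHom ℂ ℂ (blockHom g δ))
      (FreeAlgebra.equivMonoidAlgebraFreeMonoid (FreeAlgebra.ι ℂ β)))
  have h1 : FreeAlgebra.equivMonoidAlgebraFreeMonoid (FreeAlgebra.ι ℂ β)
      = MonoidAlgebra.single (FreeMonoid.of β) (1 : ℂ) := by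
    show (FreeAlgebra.lift ℂ _) (FreeAlgebra.ι ℂ β) = _
    rw [FreeAlgebra.lift_ι_apply]
    rfl
  rw [h1]
  rw [MonoidAlgebra.mapDomainAlgHom_apply, MonoidAlgebra.mapDomain_single]
  have hB : blockHom g δ (FreeMonoid.of β) = FreeMonoid.ofList (List.ofFn β) :=
    FreeMonoid.lift_eval_of _ _
  rw [hB]
  have h2 : FreeAlgebra.equivMonoidAlgebraFreeMonoid.symm
      (MonoidAlgebra.single (FreeMonoid.ofList (List.ofFn β)) (1 : ℂ))
      = ((List.ofFn β).map (FreeAlgebra.ι ℂ)).prod := by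
    show (MonoidAlgebra.lift ℂ (FreeAlgebra ℂ (Fin g)) (FreeMonoid (Fin g))
        (FreeMonoid.lift (FreeAlgebra.ι ℂ)))
        (MonoidAlgebra.single (FreeMonoid.ofList (List.ofFn β)) (1 : ℂ)) = _
    rw [MonoidAlgebra.lift_single, FreeMonoid.lift_ofList, one_smul]
  rw [h2, ncWord, List.map_ofFn]
  rfl

lemma phi_injective {g δ : ℕ} (hδ : 1 ≤ δ) : Function.Injective (phi g δ) := by
  rw [phi_eq]
  intro x y h
  simp only [AlgHom.coe_comp, Function.comp_apply, AlgEquiv.toAlgHom_eq_coe,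
    AlgHom.coe_coe] at h
  have h2 := FreeAlgebra.equivMonoidAlgebraFreeMonoid.symm.injective h
  rw [MonoidAlgebra.mapDomainAlgHom_apply, MonoidAlgebra.mapDomainAlgHom_apply] at h2
  have h3 := MonoidAlgebra.mapDomain_injective (blockHom_injective hδ) h2
  exact FreeAlgebra.equivMonoidAlgebraFreeMonoid.injective h3

lemma phi_ι {g δ : ℕ} (β : Fin δ → Fin g) :
    phi g δ (FreeAlgebra.ι ℂ β) = ncWord β := by
  rw [phi, FreeAlgebra.lift_ι_apply]

lemma phi_zWord {g d δ : ℕ} (μ : Fin d → Fin δ → Fin g) :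
    phi g δ (zWord μ) = ncGWord μ := by
  rw [zWord, ncGWord, map_list_prod, List.map_ofFn]
  have hfn : (⇑(phi g δ) ∘ fun i => FreeAlgebra.ι ℂ (μ i))
      = fun i => ncWord (μ i) := funext fun i => phi_ι (μ i)
  rw [hfn]


theorem stmt10 (g d δ t : ℕ) (hg : 1 ≤ g) (hd : 1 ≤ d) (hδ : 1 ≤ δ) (ht : 1 ≤ t)
    (P : (Fin d → (Fin δ → Fin g)) → ℂ) (A : Fin t → (Fin δ → Fin g) → ℂ) :
    ((∑ μ : Fin d → (Fin δ → Fin g), P μ • ncGWord μ)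
        = ∑ s : Fin t, (∑ β : Fin δ → Fin g, A s β • ncWord β) ^ d)
      ↔ ((∑ μ : Fin d → (Fin δ → Fin g), P μ • zWord μ)
          = ∑ s : Fin t, (∑ β : Fin δ → Fin g, A s β • FreeAlgebra.ι ℂ β) ^ d) := by
  have hinj := phi_injective (g := g) hδ
  have h1 : phi g δ (∑ μ : Fin d → (Fin δ → Fin g), P μ • zWord μ)
      = ∑ μ : Fin d → (Fin δ → Fin g), P μ • ncGWord μ := by
    rw [map_sum]
    exact Finset.sum_congr rfl fun μ _ => by rw [map_smul, phi_zWord]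
  have h2 : phi g δ (∑ s : Fin t, (∑ β : Fin δ → Fin g, A s β • FreeAlgebra.ι ℂ β) ^ d)
      = ∑ s : Fin t, (∑ β : Fin δ → Fin g, A s β • ncWord β) ^ d := by
    rw [map_sum]
    refine Finset.sum_congr rfl fun s _ => ?_
    rw [map_pow, map_sum]
    congr 1
    exact Finset.sum_congr rfl fun β _ => by rw [map_smul, phi_ι]
  constructor
  · intro h
    apply hinj
    rw [h1, h2]
    exact h
  · intro h
    rw [← h1, ← h2, h]
end

section
/- Let p be a homogeneous noncommutative polynomial of degree δd with grouped coefficient function P. Then p has a t-term (δ,d)-NC Waring decomposition if and only if p satisfies the δ-compatibility condition and the commutative collapse of φ(p), namely the polynomial ∑_{μ : Fin d → (Fin δ → Fin g)} P(μ) • ∏_{i : Fin d} Z_{μ(i)} ∈ MvPolynomial (Fin δ → Fin g) ℂ, admits a t-term Waring decomposition ∑_{s : Fin t} (∑_{β} A(s,β) • Z_β)^d into d-th powers of linear forms with A : Fin t → (Fin δ → Fin g) → ℂ. -/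
open scoped BigOperators

set_option linter.unusedSectionVars false

section Helpers

/-- noncommutative expansion of a power of a sum -/
lemma pow_sum_list {R : Type*} [Semiring R] {ι : Type*} [Fintype ι] (y : ι → R) (d : ℕ) :
    (∑ β, y β) ^ d = ∑ μ : Fin d → ι, (List.ofFn fun i => y (μ i)).prod := by
  induction d with
  | zero => simp
  | succ n ih =>
    have e1 : ∑ μ : Fin (n+1) → ι, (List.ofFn fun i => y (μ i)).prod
        = ∑ p : ι × (Fin n → ι), (List.ofFn fun i => y ((Fin.cons p.1 p.2 : Fin (n+1) → ι) i)).prod :=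
      (Fintype.sum_equiv (Fin.consEquiv fun _ => ι)
        (fun p => (List.ofFn fun i => y ((Fin.cons p.1 p.2 : Fin (n+1) → ι) i)).prod)
        (fun μ => (List.ofFn fun i => y (μ i)).prod) (fun p => rfl)).symm
    have e2 : ∑ p : ι × (Fin n → ι), (List.ofFn fun i => y ((Fin.cons p.1 p.2 : Fin (n+1) → ι) i)).prod
        = ∑ a : ι, ∑ f : Fin n → ι, (List.ofFn fun i => y ((Fin.cons a f : Fin (n+1) → ι) i)).prod :=
      Fintype.sum_prod_type fun p : ι × (Fin n → ι) =>
        (List.ofFn fun i => y ((Fin.cons p.1 p.2 : Fin (n+1) → ι) i)).prod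
    rw [pow_succ', ih]
    rw [e1]
    rw [e2]
    rw [Finset.sum_mul_sum Finset.univ Finset.univ y
      (fun μ : Fin n → ι => (List.ofFn fun i => y (μ i)).prod)]
    refine Finset.sum_congr rfl fun a _ => ?_
    refine Finset.sum_congr rfl fun f _ => ?_
    simp [List.ofFn_succ]

lemma smul_list_prod {A : Type*} [Semiring A] [Algebra ℂ A] {n : ℕ} (c : Fin n → ℂ)
    (w : Fin n → A) :
    (List.ofFn fun i => c i • w i).prod = (∏ i, c i) • (List.ofFn w).prod := by
  induction n with
  | zero => simp
  | succ n ih =>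
    rw [List.ofFn_succ, List.ofFn_succ (f := w), List.prod_cons, List.prod_cons,
      ih (fun i => c i.succ) (fun i => w i.succ), Fin.prod_univ_succ,
      smul_mul_assoc, mul_smul_comm, smul_smul]

end Helpers


section Words

def wordOf {g d δ : ℕ} (μ : Fin d → Fin δ → Fin g) : List (Fin g) :=
  (List.ofFn fun i => List.ofFn (μ i)).flatten

lemma wordOf_inj {g δ : ℕ} : ∀ {d : ℕ} (μ ν : Fin d → Fin δ → Fin g),
    wordOf μ = wordOf ν → μ = ν := by
  intro d
  induction d with
  | zero => intro μ ν _; funext i; exact i.elim0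
  | succ n ih =>
    intro μ ν h
    unfold wordOf at h
    rw [List.ofFn_succ, List.ofFn_succ (f := fun i => List.ofFn (ν i)),
      List.flatten_cons, List.flatten_cons] at h
    have hlen : (List.ofFn (μ 0)).length = (List.ofFn (ν 0)).length := by
      simp
    obtain ⟨h1, h2⟩ := List.append_inj h hlen
    have e0 : μ 0 = ν 0 := List.ofFn_inj.mp h1
    have etail : (fun i : Fin n => μ i.succ) = fun i => ν i.succ :=
      ih _ _ h2
    funext i
    refine Fin.cases ?_ ?_ i
    · exact e0
    · intro j; exact congrFun etail j

noncomputable abbrev EMB (g : ℕ) :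
    FreeAlgebra ℂ (Fin g) ≃ₐ[ℂ] MonoidAlgebra ℂ (FreeMonoid (Fin g)) :=
  FreeAlgebra.equivMonoidAlgebraFreeMonoid

lemma EMB_ι {g : ℕ} (x : Fin g) :
    EMB g (FreeAlgebra.ι ℂ x) = MonoidAlgebra.single (FreeMonoid.of x) 1 := by
  simp [FreeAlgebra.equivMonoidAlgebraFreeMonoid, MonoidAlgebra.of_apply]

lemma EMB_list {g : ℕ} : ∀ l : List (Fin g),
    EMB g ((l.map (FreeAlgebra.ι ℂ)).prod)
      = MonoidAlgebra.single (FreeMonoid.ofList l) 1 := by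
  intro l
  induction l with
  | nil => simp [MonoidAlgebra.one_def]
  | cons a l ih =>
    rw [List.map_cons, List.prod_cons, map_mul, EMB_ι, ih,
      MonoidAlgebra.single_mul_single, one_mul]
    congr 1

lemma EMB_ncWord {g δ : ℕ} (β : Fin δ → Fin g) :
    EMB g (ncWord β) = MonoidAlgebra.single (FreeMonoid.ofList (List.ofFn β)) 1 := by
  have : (List.ofFn fun i => FreeAlgebra.ι ℂ (β i)) = (List.ofFn β).map (FreeAlgebra.ι ℂ) :=
    by rw [List.map_ofFn]; rfl
  rw [ncWord, this, EMB_list]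

lemma EMB_ncGWord {g δ : ℕ} : ∀ {d : ℕ} (μ : Fin d → Fin δ → Fin g),
    EMB g (ncGWord μ) = MonoidAlgebra.single (FreeMonoid.ofList (wordOf μ)) 1 := by
  intro d
  induction d with
  | zero =>
    intro μ
    simp [ncGWord, wordOf, MonoidAlgebra.one_def]
  | succ n ih =>
    intro μ
    rw [ncGWord, List.ofFn_succ, List.prod_cons, map_mul, EMB_ncWord,
      show ((List.ofFn fun i : Fin n => ncWord (μ i.succ)).prod)
        = ncGWord (fun i => μ i.succ) from rfl, ih,
      MonoidAlgebra.single_mul_single, one_mul]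
    congr 1
    rw [← FreeMonoid.ofList_append]
    congr 1
    unfold wordOf
    rw [List.ofFn_succ, List.flatten_cons]

lemma ncCancel {g d δ : ℕ} (f h : (Fin d → Fin δ → Fin g) → ℂ)
    (H : (∑ μ : Fin d → Fin δ → Fin g, f μ • ncGWord μ)
        = ∑ μ : Fin d → Fin δ → Fin g, h μ • ncGWord μ) : f = h := by
  funext μ₀
  have H2 := congrArg (EMB g) H
  rw [map_sum, map_sum] at H2
  simp only [map_smul, EMB_ncGWord, MonoidAlgebra.smul_single', mul_one] at H2
  have H2' : (∑ μ : Fin d → Fin δ → Fin g,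
        Finsupp.single (FreeMonoid.ofList (wordOf μ)) (f μ) : FreeMonoid (Fin g) →₀ ℂ)
      = ∑ μ : Fin d → Fin δ → Fin g, Finsupp.single (FreeMonoid.ofList (wordOf μ)) (h μ) :=
    MonoidAlgebra.ofCoeff_inj.mp (by rw [MonoidAlgebra.ofCoeff_sum, MonoidAlgebra.ofCoeff_sum]; exact H2)
  have H3 := DFunLike.congr_fun H2' (FreeMonoid.ofList (wordOf μ₀))
  rw [Finsupp.finset_sum_apply, Finsupp.finset_sum_apply] at H3
  have key : ∀ c : (Fin d → Fin δ → Fin g) → ℂ,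
      (∑ μ : Fin d → Fin δ → Fin g,
        (Finsupp.single (FreeMonoid.ofList (wordOf μ)) (c μ))
          (FreeMonoid.ofList (wordOf μ₀))) = c μ₀ := by
    intro c
    rw [Finset.sum_eq_single μ₀]
    · simp [Finsupp.single_apply]
    · intro μ _ hne
      have : FreeMonoid.ofList (wordOf μ) ≠ FreeMonoid.ofList (wordOf μ₀) := by
        intro hh
        exact hne (wordOf_inj _ _ (FreeMonoid.ofList.injective hh))
      simp [Finsupp.single_apply, this]
    · intro hmem; exact absurd (Finset.mem_univ μ₀) hmem
  rw [key f, key h] at H3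
  exact H3

end Words

section NCExpand

lemma ncExpand {g d δ : ℕ} (c : (Fin δ → Fin g) → ℂ) :
    (∑ β : Fin δ → Fin g, c β • ncWord β) ^ d
      = ∑ μ : Fin d → Fin δ → Fin g, (∏ i, c (μ i)) • ncGWord μ := by
  rw [pow_sum_list]
  refine Finset.sum_congr rfl fun μ _ => ?_
  exact smul_list_prod (fun i => c (μ i)) (fun i => ncWord (μ i))

lemma nc_iff {g d δ t : ℕ} (P : (Fin d → Fin δ → Fin g) → ℂ)
    (A : Fin t → (Fin δ → Fin g) → ℂ) :
    ((∑ μ : Fin d → Fin δ → Fin g, P μ • ncGWord μ)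
        = ∑ s : Fin t, (∑ β : Fin δ → Fin g, A s β • ncWord β) ^ d)
      ↔ ∀ μ, P μ = ∑ s : Fin t, ∏ i, A s (μ i) := by
  have hR : (∑ s : Fin t, (∑ β : Fin δ → Fin g, A s β • ncWord β) ^ d)
      = ∑ μ : Fin d → Fin δ → Fin g, (∑ s : Fin t, ∏ i, A s (μ i)) • ncGWord μ := by
    simp_rw [ncExpand]
    rw [Finset.sum_comm]
    simp_rw [Finset.sum_smul]
  rw [hR]
  constructor
  · intro H μ
    exact congrFun (ncCancel _ _ H) μ
  · intro H
    exact Finset.sum_congr rfl fun μ _ => by rw [H μ]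

end NCExpand

section Comm

variable {α : Type*} [Fintype α] [DecidableEq α]

noncomputable def toMonom {d : ℕ} (μ : Fin d → α) : α →₀ ℕ := ∑ i, Finsupp.single (μ i) 1

lemma prod_monomial_one {d : ℕ} (f : Fin d → (α →₀ ℕ)) :
    (∏ i, (MvPolynomial.monomial (f i) (1 : ℂ))) = MvPolynomial.monomial (∑ i, f i) 1 := by
  induction (Finset.univ : Finset (Fin d)) using Finset.cons_induction with
  | empty => simp
  | cons a s ha ih =>
    rw [Finset.prod_cons, Finset.sum_cons, ih, MvPolynomial.monomial_mul, one_mul]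

lemma prod_X_eq_monomial {d : ℕ} (μ : Fin d → α) :
    (∏ i, (MvPolynomial.X (μ i) : MvPolynomial α ℂ))
      = MvPolynomial.monomial (toMonom μ) 1 := by
  have : ∀ i : Fin d, (MvPolynomial.X (μ i) : MvPolynomial α ℂ)
      = MvPolynomial.monomial (Finsupp.single (μ i) 1) 1 := fun i => rfl
  simp_rw [this]
  rw [prod_monomial_one, toMonom]

lemma commExpand {d : ℕ} (c : α → ℂ) :
    (∑ β : α, c β • (MvPolynomial.X β : MvPolynomial α ℂ)) ^ d
      = ∑ μ : Fin d → α, (∏ i, c (μ i)) • MvPolynomial.monomial (toMonom μ) 1 := by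
  rw [Fintype.sum_pow]
  refine Finset.sum_congr rfl fun μ _ => ?_
  simp_rw [MvPolynomial.smul_eq_C_mul, Finset.prod_mul_distrib, ← map_prod, prod_X_eq_monomial]

lemma exists_perm_of_toMonom_eq {n : ℕ} {μ ν : Fin n → α}
    (h : toMonom μ = toMonom ν) : ∃ σ : Equiv.Perm (Fin n), μ = ν ∘ σ := by
  have hcard : ∀ a : α, Fintype.card {i // μ i = a} = Fintype.card {i // ν i = a} := by
    intro a
    have happ := DFunLike.congr_fun h a
    rw [toMonom, toMonom, Finsupp.finset_sum_apply, Finsupp.finset_sum_apply] at happ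
    simp only [Finsupp.single_apply] at happ
    rw [Fintype.card_subtype, Fintype.card_subtype, Finset.card_filter, Finset.card_filter]
    simpa [eq_comm] using happ
  let e : ∀ a : α, {i // μ i = a} ≃ {i // ν i = a} := fun a => Fintype.equivOfCardEq (hcard a)
  exact ⟨Equiv.ofFiberEquiv e, funext fun i => (Equiv.ofFiberEquiv_map e i).symm⟩

lemma commCancel {d : ℕ} (f h : (Fin d → α) → ℂ)
    (hf : ∀ μ ν : Fin d → α, toMonom μ = toMonom ν → f μ = f ν)
    (hh : ∀ μ ν : Fin d → α, toMonom μ = toMonom ν → h μ = h ν)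
    (H : (∑ μ : Fin d → α, f μ • (MvPolynomial.monomial (toMonom μ) (1 : ℂ)))
        = ∑ μ : Fin d → α, h μ • MvPolynomial.monomial (toMonom μ) 1) :
    f = h := by
  funext μ₀
  have Hc := congrArg (MvPolynomial.coeff (toMonom μ₀)) H
  rw [MvPolynomial.coeff_sum, MvPolynomial.coeff_sum] at Hc
  simp only [MvPolynomial.coeff_smul, MvPolynomial.coeff_monomial, smul_eq_mul,
    mul_ite, mul_one, mul_zero] at Hc
  rw [← Finset.sum_filter, ← Finset.sum_filter] at Hc
  set S := Finset.univ.filter (fun μ : Fin d → α => toMonom μ = toMonom μ₀) with hS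
  have hmem : μ₀ ∈ S := by simp [hS]
  have hfS : ∑ μ ∈ S, f μ = S.card * f μ₀ := by
    rw [Finset.sum_congr rfl (fun μ hμ => hf μ μ₀ (by simpa [hS] using hμ))]
    simp [mul_comm]
  have hhS : ∑ μ ∈ S, h μ = S.card * h μ₀ := by
    rw [Finset.sum_congr rfl (fun μ hμ => hh μ μ₀ (by simpa [hS] using hμ))]
    simp [mul_comm]
  rw [hfS, hhS] at Hc
  have hcard : (S.card : ℂ) ≠ 0 := by
    simp only [ne_eq, Nat.cast_eq_zero, Finset.card_eq_zero]
    intro h0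
    rw [h0] at hmem
    exact absurd hmem (Finset.notMem_empty μ₀)
  exact mul_left_cancel₀ hcard Hc

end Comm

theorem stmt12 (g d δ t : ℕ) (hg : 1 ≤ g) (hd : 1 ≤ d) (hδ : 1 ≤ δ) (ht : 1 ≤ t)
    (P : (Fin d → (Fin δ → Fin g)) → ℂ) :
    (∃ A : Fin t → (Fin δ → Fin g) → ℂ,
        (∑ μ : Fin d → (Fin δ → Fin g), P μ • ncGWord μ)
          = ∑ s : Fin t, (∑ β : Fin δ → Fin g, A s β • ncWord β) ^ d)
      ↔ ((∀ (μ : Fin d → (Fin δ → Fin g)) (π : Equiv.Perm (Fin d)), P (μ ∘ π) = P μ)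
          ∧ ∃ A : Fin t → (Fin δ → Fin g) → ℂ,
            (∑ μ : Fin d → (Fin δ → Fin g), P μ • ∏ i : Fin d, MvPolynomial.X (μ i)
                : MvPolynomial (Fin δ → Fin g) ℂ)
              = ∑ s : Fin t, (∑ β : Fin δ → Fin g, A s β • MvPolynomial.X β) ^ d) := by
  classical
  have hcomm : ∀ A : Fin t → (Fin δ → Fin g) → ℂ,
      (∑ s : Fin t, (∑ β : Fin δ → Fin g, A s β • MvPolynomial.X β) ^ d
          : MvPolynomial (Fin δ → Fin g) ℂ)
        = ∑ μ : Fin d → (Fin δ → Fin g),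
            (∑ s : Fin t, ∏ i, A s (μ i)) • MvPolynomial.monomial (toMonom μ) 1 := by
    intro A
    simp_rw [commExpand]
    rw [Finset.sum_comm]
    simp_rw [Finset.sum_smul]
  constructor
  · rintro ⟨A, hA⟩
    have hP : ∀ μ, P μ = ∑ s : Fin t, ∏ i, A s (μ i) := (nc_iff P A).mp hA
    have hsym : ∀ (μ : Fin d → (Fin δ → Fin g)) (π : Equiv.Perm (Fin d)), P (μ ∘ π) = P μ := by
      intro μ π
      rw [hP, hP]
      refine Finset.sum_congr rfl fun s _ => ?_
      exact Equiv.prod_comp π fun i => A s (μ i)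
    refine ⟨hsym, A, ?_⟩
    rw [hcomm A]
    refine Finset.sum_congr rfl fun μ _ => ?_
    rw [hP μ, prod_X_eq_monomial]
  · rintro ⟨hsym, A, hA⟩
    refine ⟨A, (nc_iff P A).mpr ?_⟩
    set Q : (Fin d → (Fin δ → Fin g)) → ℂ := fun μ => ∑ s : Fin t, ∏ i, A s (μ i) with hQdef
    have hA' : (∑ μ : Fin d → (Fin δ → Fin g), P μ • MvPolynomial.monomial (toMonom μ) (1 : ℂ))
        = ∑ μ : Fin d → (Fin δ → Fin g), Q μ • MvPolynomial.monomial (toMonom μ) 1 := by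
      rw [← hcomm A, ← hA]
      refine Finset.sum_congr rfl fun μ _ => ?_
      rw [prod_X_eq_monomial]
    have hPc : ∀ μ ν : Fin d → (Fin δ → Fin g), toMonom μ = toMonom ν → P μ = P ν := by
      intro μ ν hμν
      obtain ⟨σ, hσ⟩ := exists_perm_of_toMonom_eq hμν
      rw [hσ]
      exact hsym ν σ
    have hQc : ∀ μ ν : Fin d → (Fin δ → Fin g), toMonom μ = toMonom ν → Q μ = Q ν := by
      intro μ ν hμν
      obtain ⟨σ, hσ⟩ := exists_perm_of_toMonom_eq hμν
      rw [hσ, hQdef]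
      refine Finset.sum_congr rfl fun s _ => ?_
      exact Equiv.prod_comp σ fun i => A s (ν i)
    have := commCancel P Q hPc hQc hA'
    intro μ
    rw [congrFun this μ]
end

section
/- Let p = x₀x₁x₁x₀ + x₀x₁x₀x₀ + x₀x₀x₁x₀ + x₀⁴ ∈ FreeAlgebra ℂ (Fin 2) (the expansion of (x₀x₁ + x₀²)(x₁x₀ + x₀²)). Then: (a) p violates the 2-compatibility condition (its grouped coefficient at the word x₀x₀x₀x₁ is 0 while at x₀x₁x₀x₀ it is 1, although these words have the same multiset of 2-blocks), and consequently p has no (2,2)-NC Waring decomposition: for no t ≥ 1 and no homogeneous degree-2 noncommutative polynomials H₁, …, H_t does p = ∑_{s} H_s² hold; (b) nevertheless the commutative collapse of p equals (X₀X₁ + X₀²)² in MvPolynomial (Fin 2) ℂ. -/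
open scoped BigOperators

/-- The generators of the free algebra on two letters. -/
noncomputable def x (j : Fin 2) : FreeAlgebra ℂ (Fin 2) := FreeAlgebra.ι ℂ j

/-- The polynomial `p = x₀x₁x₁x₀ + x₀x₁x₀x₀ + x₀x₀x₁x₀ + x₀⁴`,
the expansion of `(x₀x₁ + x₀²)(x₁x₀ + x₀²)`. -/
noncomputable def pEx : FreeAlgebra ℂ (Fin 2) :=
  x 0 * x 1 * x 1 * x 0 + x 0 * x 1 * x 0 * x 0 + x 0 * x 0 * x 1 * x 0 + x 0 * x 0 * x 0 * x 0

noncomputable def cf (a : FreeAlgebra ℂ (Fin 2)) (w : FreeMonoid (Fin 2)) : ℂ :=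
  (FreeAlgebra.equivMonoidAlgebraFreeMonoid a).coeff w

lemma cf_ι (j : Fin 2) : (FreeAlgebra.equivMonoidAlgebraFreeMonoid (x j)
    : MonoidAlgebra ℂ (FreeMonoid (Fin 2)))
    = MonoidAlgebra.single (FreeMonoid.of j) 1 := by
  simp [x, FreeAlgebra.equivMonoidAlgebraFreeMonoid, MonoidAlgebra.of_apply]

open Classical in
lemma cf_word (a b c d : Fin 2) (w : FreeMonoid (Fin 2)) :
    cf (x a * x b * x c * x d) w
      = if FreeMonoid.of a * FreeMonoid.of b * FreeMonoid.of c * FreeMonoid.of d = w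
        then 1 else 0 := by
  unfold cf
  rw [map_mul, map_mul, map_mul, cf_ι, cf_ι, cf_ι, cf_ι,
    MonoidAlgebra.single_mul_single, MonoidAlgebra.single_mul_single,
    MonoidAlgebra.single_mul_single]
  simp [MonoidAlgebra.coeff_single, Finsupp.single_apply]

lemma cf_add (a b : FreeAlgebra ℂ (Fin 2)) (w) : cf (a + b) w = cf a w + cf b w := by
  simp [cf, map_add]

lemma cf_smul (c : ℂ) (a : FreeAlgebra ℂ (Fin 2)) (w) : cf (c • a) w = c * cf a w := by
  simp [cf, map_smul]

lemma cf_sum {ι : Type*} (s : Finset ι) (f : ι → FreeAlgebra ℂ (Fin 2)) (w) :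
    cf (∑ i ∈ s, f i) w = ∑ i ∈ s, cf (f i) w := by
  simp only [cf, map_sum, MonoidAlgebra.coeff_sum]
  exact Finsupp.finset_sum_apply s _ w

lemma word4_eq_iff (a b c d a' b' c' d' : Fin 2) :
    (FreeMonoid.of a * FreeMonoid.of b * FreeMonoid.of c * FreeMonoid.of d
      = FreeMonoid.of a' * FreeMonoid.of b' * FreeMonoid.of c' * FreeMonoid.of d')
    ↔ (a = a' ∧ b = b' ∧ c = c' ∧ d = d') := by
  constructor
  · intro h
    have := congrArg FreeMonoid.toList h
    simp [FreeMonoid.toList_mul, FreeMonoid.toList_of] at this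
    tauto
  · rintro ⟨rfl, rfl, rfl, rfl⟩; rfl

noncomputable def wd (μ : Fin 2 → Fin 2 → Fin 2) : FreeMonoid (Fin 2) :=
  FreeMonoid.of (μ 0 0) * FreeMonoid.of (μ 0 1) * FreeMonoid.of (μ 1 0) * FreeMonoid.of (μ 1 1)

lemma wd_inj : Function.Injective wd := by
  intro μ ν h
  rw [wd, wd, word4_eq_iff] at h
  obtain ⟨h1, h2, h3, h4⟩ := h
  funext i j
  fin_cases i <;> fin_cases j <;> assumption

lemma coeff_eq (P : (Fin 2 → Fin 2 → Fin 2) → ℂ) (μ₀ : Fin 2 → Fin 2 → Fin 2) :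
    cf (∑ μ : Fin 2 → Fin 2 → Fin 2,
        P μ • (x (μ 0 0) * x (μ 0 1) * x (μ 1 0) * x (μ 1 1))) (wd μ₀) = P μ₀ := by
  rw [cf_sum]
  simp only [cf_smul, cf_word, wd]
  rw [Finset.sum_eq_single μ₀]
  · rw [if_pos rfl, mul_one]
  · intro b _ hb
    rw [if_neg, mul_zero]
    exact fun h => hb (wd_inj h)
  · intro h; exact absurd (Finset.mem_univ μ₀) h

lemma coeff_sq (A B : (Fin 2 → Fin 2) → ℂ) (μ₀ : Fin 2 → Fin 2 → Fin 2) :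
    cf ((∑ β : Fin 2 → Fin 2, A β • (x (β 0) * x (β 1)))
        * (∑ γ : Fin 2 → Fin 2, B γ • (x (γ 0) * x (γ 1)))) (wd μ₀)
      = A (μ₀ 0) * B (μ₀ 1) := by
  rw [Finset.sum_mul_sum]
  rw [cf_sum]
  have key : ∀ β γ : Fin 2 → Fin 2,
      (A β • (x (β 0) * x (β 1))) * (B γ • (x (γ 0) * x (γ 1)))
        = (A β * B γ) • (x (β 0) * x (β 1) * x (γ 0) * x (γ 1)) := by
    intro β γ
    rw [smul_mul_smul_comm]
    simp only [mul_assoc]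
  simp only [cf_sum, key, cf_smul, cf_word, wd]
  rw [Finset.sum_eq_single (μ₀ 0)]
  · rw [Finset.sum_eq_single (μ₀ 1)]
    · rw [if_pos rfl, mul_one]
    · intro γ _ hγ
      rw [if_neg, mul_zero]
      rw [word4_eq_iff]
      rintro ⟨-, -, h3, h4⟩
      exact hγ (funext fun j => by fin_cases j <;> assumption)
    · intro h; exact absurd (Finset.mem_univ _) h
  · intro β _ hβ
    rw [Finset.sum_eq_zero]
    intro γ _
    rw [if_neg, mul_zero]
    rw [word4_eq_iff]
    rintro ⟨h1, h2, -, -⟩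
    exact hβ (funext fun j => by fin_cases j <;> assumption)
  · intro h; exact absurd (Finset.mem_univ _) h

lemma fm_eq_iff (u v : FreeMonoid (Fin 2)) :
    u = v ↔ FreeMonoid.toList u = FreeMonoid.toList v :=
  ⟨congrArg _, fun h => FreeMonoid.toList.injective h⟩

lemma wd_a : wd ![![0, 0], ![0, 1]]
    = FreeMonoid.of 0 * FreeMonoid.of 0 * FreeMonoid.of 0 * FreeMonoid.of 1 := by
  simp [wd]

lemma wd_b : wd ![![0, 1], ![0, 0]]
    = FreeMonoid.of 0 * FreeMonoid.of 1 * FreeMonoid.of 0 * FreeMonoid.of 0 := by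
  simp [wd]

lemma cf_pEx_a : cf pEx (wd ![![0, 0], ![0, 1]]) = 0 := by
  rw [wd_a]; unfold pEx; rw [ cf_add, cf_add, cf_add, cf_word, cf_word, cf_word, cf_word]
  norm_num [fm_eq_iff, FreeMonoid.toList_mul, FreeMonoid.toList_of]

lemma cf_pEx_b : cf pEx (wd ![![0, 1], ![0, 0]]) = 1 := by
  rw [wd_b]; unfold pEx; rw [ cf_add, cf_add, cf_add, cf_word, cf_word, cf_word, cf_word]
  norm_num [fm_eq_iff, FreeMonoid.toList_mul, FreeMonoid.toList_of]

theorem stmt18 :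
    -- (a) p violates the 2-compatibility condition ...
    (∀ P : (Fin 2 → (Fin 2 → Fin 2)) → ℂ,
      pEx = (∑ μ : Fin 2 → (Fin 2 → Fin 2),
          P μ • (x (μ 0 0) * x (μ 0 1) * x (μ 1 0) * x (μ 1 1))) →
      (P (![![0, 0], ![0, 1]] : Fin 2 → Fin 2 → Fin 2) = 0
        ∧ P (![![0, 1], ![0, 0]] : Fin 2 → Fin 2 → Fin 2) = 1
        ∧ ∃ π : Equiv.Perm (Fin 2),
            (![![0, 1], ![0, 0]] : Fin 2 → Fin 2 → Fin 2)
              = (![![0, 0], ![0, 1]] : Fin 2 → Fin 2 → Fin 2) ∘ π))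
    ∧
    -- ... and consequently p has no (2,2)-NC Waring decomposition
    (¬ ∃ (t : ℕ) (_ : 1 ≤ t) (A : Fin t → (Fin 2 → Fin 2) → ℂ),
        pEx = ∑ s : Fin t, (∑ β : Fin 2 → Fin 2, A s β • (x (β 0) * x (β 1))) ^ 2)
    ∧
    -- (b) nevertheless the commutative collapse of p equals (X₀X₁ + X₀²)²
    ((MvPolynomial.X 0 * MvPolynomial.X 1 * MvPolynomial.X 1 * MvPolynomial.X 0
        + MvPolynomial.X 0 * MvPolynomial.X 1 * MvPolynomial.X 0 * MvPolynomial.X 0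
        + MvPolynomial.X 0 * MvPolynomial.X 0 * MvPolynomial.X 1 * MvPolynomial.X 0
        + MvPolynomial.X 0 * MvPolynomial.X 0 * MvPolynomial.X 0 * MvPolynomial.X 0
        : MvPolynomial (Fin 2) ℂ)
      = (MvPolynomial.X 0 * MvPolynomial.X 1 + MvPolynomial.X 0 ^ 2) ^ 2) := by
  refine ⟨?_, ?_, by ring⟩
  · intro P h
    have hA : cf pEx (wd ![![0, 0], ![0, 1]]) = P ![![0, 0], ![0, 1]] := by
      rw [h]; exact coeff_eq P _
    have hB : cf pEx (wd ![![0, 1], ![0, 0]]) = P ![![0, 1], ![0, 0]] := by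
      rw [h]; exact coeff_eq P _
    refine ⟨by rw [← hA, cf_pEx_a], by rw [← hB, cf_pEx_b], ⟨Equiv.swap 0 1, ?_⟩⟩
    funext i
    fin_cases i <;> simp
  · rintro ⟨t, ht, A, h⟩
    have hA : cf pEx (wd ![![0, 0], ![0, 1]]) = ∑ s : Fin t, A s ![0, 0] * A s ![0, 1] := by
      rw [h, cf_sum]
      refine Finset.sum_congr rfl fun s _ => ?_
      rw [sq]
      simpa using coeff_sq (A s) (A s) ![![0, 0], ![0, 1]]
    have hB : cf pEx (wd ![![0, 1], ![0, 0]]) = ∑ s : Fin t, A s ![0, 1] * A s ![0, 0] := by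
      rw [h, cf_sum]
      refine Finset.sum_congr rfl fun s _ => ?_
      rw [sq]
      simpa using coeff_sq (A s) (A s) ![![0, 1], ![0, 0]]
    have : (0 : ℂ) = 1 := by
      rw [← cf_pEx_a, hA, ← cf_pEx_b, hB] at *
      · exact Finset.sum_congr rfl fun s _ => mul_comm _ _
    exact absurd this (by norm_num)
end
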